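/- arXiv:1110.5489 — 2 statements merged into one kernel-verified Lean document; each statement's English description precedes it below -/
import Mathlib

section
/- Let (X^ε, Ω, P^ε) be an irreducible, OM-reversible parametrized family of Markov chains on the configuration space Ω of n ≥ 1 particles on a finite connected graph, in which at most one particle jumps to an adjacent vertex at each time step (P(x,y) > 0 only if y = x or y = x^{i,j} with v_i ∼ v_j and x_i ≥ 1), such that φ(P(x,y)) ∈ {0,1} for all x, y with P(x,y) > 0, and such that the stationary distributions π^ε have entries with integer orders of magnitude satisfying φ(π(x)) = |s(x)| − 1 for every x ∈ Ω. Then the family is a generalized clustering process; that is: if |s(x)| = |s(y)| and P(x,y) > 0 then φ(P(x,y)) = φ(P(y,x)), and if |s(x)| = |s(y)| − 1 and P(x,y) > 0 then φ(P(x,y)) = 1 and φ(P(y,x)) = 0. -/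
open Finset

/-- `f` is `Θ(ε^k)` as `ε → 0⁺`: there are positive constants `M₁, M₂, ε̄` with
`M₁ ε^k ≤ f ε ≤ M₂ ε^k` for all `0 < ε < ε̄`. -/
def IsTheta (f : ℝ → ℝ) (k : ℤ) : Prop :=
  ∃ M₁ M₂ εbar : ℝ, 0 < M₁ ∧ 0 < M₂ ∧ 0 < εbar ∧
    ∀ ε : ℝ, 0 < ε → ε < εbar → M₁ * ε ^ k ≤ f ε ∧ f ε ≤ M₂ * ε ^ k

/-- `P(u,v) > 0` in the order-of-magnitude sense: `ε ↦ P^ε(u,v)` is `Θ(ε^k)`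
for some integer `k`. -/
def EPos {Ω : Type*} (P : ℝ → Ω → Ω → ℝ) (u v : Ω) : Prop :=
  ∃ k : ℤ, IsTheta (fun ε => P ε u v) k

/-- Configurations of `n` particles on the vertex set `V`. -/
abbrev Config (V : Type) [Fintype V] (n : ℕ) := {x : V → ℕ // ∑ v, x v = n}

noncomputable instance Config.fintype {V : Type} [Fintype V] [DecidableEq V] {n : ℕ} :
    Fintype (Config V n) :=
  Fintype.ofInjective
    (fun x : Config V n => fun v : V =>
      (⟨x.val v, Nat.lt_succ_of_le ((Finset.single_le_sum
        (f := x.val) (fun i _ => Nat.zero_le _) (Finset.mem_univ v)).trans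
        (le_of_eq x.2))⟩ : Fin (n + 1)))
    (fun a b h => Subtype.ext (funext fun v => congrArg Fin.val (congrFun h v)))

/-- The configuration `x^{i,j}` obtained from `x` by moving one particle from vertex `i`
to vertex `j` (with `x^{i,i} = x`). -/
def move {V : Type} [DecidableEq V] (x : V → ℕ) (i j : V) : V → ℕ :=
  if i = j then x else Function.update (Function.update x i (x i - 1)) j (x j + 1)

/-- The support of a configuration: the set of occupied vertices. -/
def supp {V : Type} [Fintype V] [DecidableEq V] (x : V → ℕ) : Finset V :=
  Finset.univ.filter fun v => x v ≠ 0

namespace ClusterAux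

lemma zpow_anti {ε : ℝ} (h0 : 0 < ε) (h1 : ε ≤ 1) {m k : ℤ} (hmk : m ≤ k) :
    ε ^ k ≤ ε ^ m := by
  have he : ε ^ k = ε ^ m * ε ^ (k - m) := by
    rw [← zpow_add₀ (ne_of_gt h0)]; ring_nf
  rw [he]
  have hn : (0:ℤ) ≤ k - m := by omega
  have h2 : ε ^ (k - m) ≤ 1 := by
    obtain ⟨d, hd⟩ := Int.le.dest hn
    have hkm : k - m = (d : ℤ) := by omega
    rw [hkm, zpow_natCast]
    exact pow_le_one₀ (le_of_lt h0) h1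
  nlinarith [zpow_pos h0 m, zpow_pos h0 (k - m)]

lemma le_of_theta_le {f g : ℝ → ℝ} {k l : ℤ}
    (hf : IsTheta f k) (hg : IsTheta g l)
    (δ : ℝ) (hδ : 0 < δ) (hle : ∀ ε : ℝ, 0 < ε → ε < δ → f ε ≤ g ε) : l ≤ k := by
  by_contra hlt
  push_neg at hlt
  obtain ⟨M₁, M₂, e1, hM₁, hM₂, he1, h1⟩ := hf
  obtain ⟨N₁, N₂, e2, hN₁, hN₂, he2, h2⟩ := hg
  set M := min δ (min 1 (min e1 (min e2 (M₁ / (2 * N₂))))) with hM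
  have hq : 0 < M₁ / (2 * N₂) := by positivity
  have hM0 : 0 < M := by positivity
  set ε := M / 2 with hε
  have hε0 : 0 < ε := by positivity
  have hMδ : M ≤ δ := min_le_left _ _
  have hM1 : M ≤ 1 := le_trans (min_le_right _ _) (min_le_left _ _)
  have hMe1 : M ≤ e1 := le_trans (min_le_right _ _) (le_trans (min_le_right _ _) (min_le_left _ _))
  have hMe2 : M ≤ e2 := le_trans (min_le_right _ _)
    (le_trans (min_le_right _ _) (le_trans (min_le_right _ _) (min_le_left _ _)))
  have hMq : M ≤ M₁ / (2 * N₂) := le_trans (min_le_right _ _)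
    (le_trans (min_le_right _ _) (le_trans (min_le_right _ _) (min_le_right _ _)))
  have hεδ : ε < δ := by rw [hε]; linarith
  have hεe1 : ε < e1 := by rw [hε]; linarith
  have hεe2 : ε < e2 := by rw [hε]; linarith
  have hε1 : ε ≤ 1 := by rw [hε]; linarith
  have hεq : ε < M₁ / (2 * N₂) := by rw [hε]; linarith
  -- chain of inequalities
  have c1 : M₁ * ε ^ k ≤ f ε := (h1 ε hε0 hεe1).1
  have c2 : f ε ≤ g ε := hle ε hε0 hεδ
  have c3 : g ε ≤ N₂ * ε ^ l := (h2 ε hε0 hεe2).2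
  have c4 : ε ^ l ≤ ε ^ (k + 1) := zpow_anti hε0 hε1 (by omega)
  have c5 : ε ^ (k + 1) = ε ^ k * ε := by
    rw [zpow_add₀ (ne_of_gt hε0)]; simp
  have hpk : (0:ℝ) < ε ^ k := zpow_pos hε0 k
  have : M₁ * ε ^ k ≤ N₂ * (ε ^ k * ε) := by
    calc M₁ * ε ^ k ≤ N₂ * ε ^ l := by linarith
    _ ≤ N₂ * ε ^ (k+1) := by nlinarith
    _ = N₂ * (ε ^ k * ε) := by rw [c5]
  have hfin : M₁ ≤ N₂ * ε := by
    have h' : M₁ * ε ^ k ≤ (N₂ * ε) * ε ^ k := by nlinarith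
    exact le_of_mul_le_mul_right h' hpk
  have : N₂ * ε < N₂ * (M₁ / (2 * N₂)) := by nlinarith
  have : N₂ * (M₁ / (2 * N₂)) = M₁ / 2 := by field_simp
  linarith

lemma theta_unique {f : ℝ → ℝ} {k l : ℤ} (hf : IsTheta f k) (hg : IsTheta f l) : k = l :=
  le_antisymm (le_of_theta_le hg hf 1 one_pos (fun _ _ _ => le_refl _))
    (le_of_theta_le hf hg 1 one_pos (fun _ _ _ => le_refl _))

lemma theta_mul {f g : ℝ → ℝ} {k l : ℤ} (hf : IsTheta f k) (hg : IsTheta g l) :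
    IsTheta (fun ε => f ε * g ε) (k + l) := by
  obtain ⟨M₁, M₂, e1, hM₁, hM₂, he1, h1⟩ := hf
  obtain ⟨N₁, N₂, e2, hN₁, hN₂, he2, h2⟩ := hg
  refine ⟨M₁ * N₁, M₂ * N₂, min e1 e2, by positivity, by positivity, by positivity, ?_⟩
  intro ε hε0 hεe
  have hεe1 : ε < e1 := lt_of_lt_of_le hεe (min_le_left _ _)
  have hεe2 : ε < e2 := lt_of_lt_of_le hεe (min_le_right _ _)
  obtain ⟨a1, a2⟩ := h1 ε hε0 hεe1
  obtain ⟨b1, b2⟩ := h2 ε hε0 hεe2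
  have hpk : (0:ℝ) < ε ^ k := zpow_pos hε0 k
  have hpl : (0:ℝ) < ε ^ l := zpow_pos hε0 l
  have he : ε ^ (k + l) = ε ^ k * ε ^ l := zpow_add₀ (ne_of_gt hε0) k l
  have hfpos : 0 < f ε := lt_of_lt_of_le (by positivity) a1
  have hgpos : 0 < g ε := lt_of_lt_of_le (by positivity) b1
  constructor
  · show M₁ * N₁ * ε ^ (k + l) ≤ f ε * g ε
    rw [he]
    calc M₁ * N₁ * (ε ^ k * ε ^ l) = (M₁ * ε ^ k) * (N₁ * ε ^ l) := by ring
    _ ≤ f ε * g ε := mul_le_mul a1 b1 (by positivity) (le_of_lt hfpos)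
  · show f ε * g ε ≤ M₂ * N₂ * ε ^ (k + l)
    rw [he]
    calc f ε * g ε ≤ (M₂ * ε ^ k) * (N₂ * ε ^ l) :=
      mul_le_mul a2 b2 (le_of_lt hgpos) (le_trans (le_of_lt hfpos) a2)
    _ = M₂ * N₂ * (ε ^ k * ε ^ l) := by ring

lemma theta_add {f g : ℝ → ℝ} {k l : ℤ} (hf : IsTheta f k) (hg : IsTheta g l) :
    IsTheta (fun ε => f ε + g ε) (min k l) := by
  obtain ⟨M₁, M₂, e1, hM₁, hM₂, he1, h1⟩ := hf
  obtain ⟨N₁, N₂, e2, hN₁, hN₂, he2, h2⟩ := hg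
  refine ⟨min M₁ N₁, M₂ + N₂, min 1 (min e1 e2), by positivity, by positivity, by positivity, ?_⟩
  intro ε hε0 hεe
  have hε1 : ε ≤ 1 := le_of_lt (lt_of_lt_of_le hεe (min_le_left _ _))
  have hεe1 : ε < e1 := lt_of_lt_of_le hεe (le_trans (min_le_right _ _) (min_le_left _ _))
  have hεe2 : ε < e2 := lt_of_lt_of_le hεe (le_trans (min_le_right _ _) (min_le_right _ _))
  obtain ⟨a1, a2⟩ := h1 ε hε0 hεe1
  obtain ⟨b1, b2⟩ := h2 ε hε0 hεe2
  have hfpos : 0 < f ε := lt_of_lt_of_le (by positivity) a1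
  have hgpos : 0 < g ε := lt_of_lt_of_le (by positivity) b1
  have hk : ε ^ k ≤ ε ^ (min k l) := zpow_anti hε0 hε1 (min_le_left _ _)
  have hl : ε ^ l ≤ ε ^ (min k l) := zpow_anti hε0 hε1 (min_le_right _ _)
  constructor
  · show min M₁ N₁ * ε ^ (min k l) ≤ f ε + g ε
    rcases le_total k l with h | h
    · have : min k l = k := min_eq_left h
      rw [this]
      have : min M₁ N₁ * ε ^ k ≤ M₁ * ε ^ k :=
        mul_le_mul_of_nonneg_right (min_le_left _ _) (le_of_lt (zpow_pos hε0 k))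
      linarith
    · have : min k l = l := min_eq_right h
      rw [this]
      have : min M₁ N₁ * ε ^ l ≤ N₁ * ε ^ l :=
        mul_le_mul_of_nonneg_right (min_le_right _ _) (le_of_lt (zpow_pos hε0 l))
      linarith
  · show f ε + g ε ≤ (M₂ + N₂) * ε ^ (min k l)
    have u1 : M₂ * ε ^ k ≤ M₂ * ε ^ (min k l) := mul_le_mul_of_nonneg_left hk (le_of_lt hM₂)
    have u2 : N₂ * ε ^ l ≤ N₂ * ε ^ (min k l) := mul_le_mul_of_nonneg_left hl (le_of_lt hN₂)
    have : (M₂ + N₂) * ε ^ (min k l) = M₂ * ε ^ (min k l) + N₂ * ε ^ (min k l) := by ring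
    linarith

lemma theta_congr {f g : ℝ → ℝ} {k : ℤ} (δ : ℝ) (hδ : 0 < δ)
    (h : ∀ ε : ℝ, 0 < ε → ε < δ → f ε = g ε) (hg : IsTheta g k) : IsTheta f k := by
  obtain ⟨M₁, M₂, e1, hM₁, hM₂, he1, h1⟩ := hg
  refine ⟨M₁, M₂, min δ e1, hM₁, hM₂, by positivity, ?_⟩
  intro ε hε0 hεe
  rw [h ε hε0 (lt_of_lt_of_le hεe (min_le_left _ _))]
  exact h1 ε hε0 (lt_of_lt_of_le hεe (min_le_right _ _))

lemma theta_sum {α : Type*} (s : Finset α) (f : α → ℝ → ℝ) (k : α → ℤ) :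
    s.Nonempty → (∀ a ∈ s, IsTheta (f a) (k a)) →
    ∃ K : ℤ, IsTheta (fun ε => ∑ a ∈ s, f a ε) K ∧ (∀ a ∈ s, K ≤ k a) ∧ ∃ a ∈ s, K = k a := by
  classical
  induction s using Finset.cons_induction with
  | empty => intro h; exact absurd h (by simp)
  | cons a s ha ih =>
    intro _ hf
    rcases s.eq_empty_or_nonempty with rfl | hs
    · refine ⟨k a, ?_, ?_, ⟨a, by simp, rfl⟩⟩
      · simpa using hf a (by simp)
      · intro b hb; simp at hb; subst hb; exact le_refl _
    · obtain ⟨K, hK, hKle, a', ha', hKa⟩ := ih hs (fun b hb => hf b (Finset.mem_cons_of_mem hb))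
      refine ⟨min (k a) K, ?_, ?_, ?_⟩
      · have := theta_add (hf a (Finset.mem_cons_self a s)) hK
        have heq : (fun ε => ∑ x ∈ Finset.cons a s ha, f x ε)
            = fun ε => f a ε + ∑ x ∈ s, f x ε := by
          funext ε; rw [Finset.sum_cons]
        rw [heq]; exact this
      · intro b hb
        rcases Finset.mem_cons.mp hb with rfl | hb
        · exact min_le_left _ _
        · exact le_trans (min_le_right _ _) (hKle b hb)
      · rcases le_total (k a) K with h | h
        · exact ⟨a, Finset.mem_cons_self a s, min_eq_left h⟩
        · exact ⟨a', Finset.mem_cons_of_mem ha', by rw [min_eq_right h, hKa]⟩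

lemma exists_exit {Ω : Type*} (S : Ω → Prop) (c : ℕ → Ω) (r : ℕ)
    (h0 : S (c 0)) (hr : ¬ S (c r)) : ∃ i < r, S (c i) ∧ ¬ S (c (i + 1)) := by
  induction r with
  | zero => exact absurd h0 hr
  | succ r ih =>
    by_cases h : S (c r)
    · exact ⟨r, Nat.lt_succ_self r, h, hr⟩
    · obtain ⟨i, hi, h1, h2⟩ := ih h
      exact ⟨i, hi.trans (Nat.lt_succ_self r), h1, h2⟩

end ClusterAux

/-- Converse: an irreducible, OM-reversible interacting particle system in which at most
one particle moves to an adjacent vertex at each step, with `φ(P(x,y)) ∈ {0,1}`, whose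
stationary distributions have orders of magnitude `φ(π(x)) = |s(x)| − 1`, is a
generalized clustering process. -/
theorem converse_is_generalized_clustering_process
    {V : Type} [Fintype V] [DecidableEq V]
    (G : SimpleGraph V) (hconn : G.Connected)
    (n : ℕ) (hn : 1 ≤ n)
    (P : ℝ → Config V n → Config V n → ℝ)
    (hstoch : ∀ ε : ℝ, 0 < ε →
      (∀ x y : Config V n, 0 ≤ P ε x y) ∧ ∀ x : Config V n, ∑ y, P ε x y = 1)
    (hmoves : ∀ x y : Config V n, EPos P x y →
      y = x ∨ ∃ i j : V, G.Adj i j ∧ 1 ≤ x.val i ∧ y.val = move x.val i j)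
    (hzero : ∀ x y : Config V n, ¬ EPos P x y →
      ∃ εbar > (0 : ℝ), ∀ ε : ℝ, 0 < ε → ε < εbar → P ε x y = 0)
    (hsym : ∀ x y : Config V n, EPos P x y ↔ EPos P y x)
    (φP : Config V n → Config V n → ℤ)
    (hφP : ∀ x y : Config V n, EPos P x y → IsTheta (fun ε => P ε x y) (φP x y))
    (h01 : ∀ x y : Config V n, EPos P x y → φP x y = 0 ∨ φP x y = 1)
    (hirr : ∀ u v : Config V n, ∃ (r : ℕ) (c : ℕ → Config V n),
      c 0 = u ∧ c r = v ∧ ∀ i < r, EPos P (c i) (c (i + 1)))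
    (homrev : ∃ ν : Config V n → ℤ, ∀ u v : Config V n, EPos P u v →
      ν u + φP u v = ν v + φP v u)
    (π : ℝ → Config V n → ℝ)
    (hstat : ∀ ε : ℝ, 0 < ε → (∀ z : Config V n, 0 ≤ π ε z) ∧ (∑ z, π ε z) = 1 ∧
      ∀ y : Config V n, (∑ x, π ε x * P ε x y) = π ε y)
    (φπ : Config V n → ℤ)
    (hφπ : ∀ z : Config V n, IsTheta (fun ε => π ε z) (φπ z))
    (hφπval : ∀ z : Config V n, φπ z = ((supp z.val).card : ℤ) - 1) :
    (∀ x y : Config V n, EPos P x y →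
      (supp x.val).card = (supp y.val).card → φP x y = φP y x) ∧
    (∀ x y : Config V n, EPos P x y →
      (supp x.val).card + 1 = (supp y.val).card → φP x y = 1 ∧ φP y x = 0) := by

  classical
  obtain ⟨ν, hν⟩ := homrev
  have key : ∀ x y : Config V n, EPos P x y → φπ y ≤ φπ x + φP x y := by
    intro x y hxy
    refine ClusterAux.le_of_theta_le (ClusterAux.theta_mul (hφπ x) (hφP x y hxy)) (hφπ y)
      1 one_pos ?_
    intro ε hε0 _
    obtain ⟨hπ0, -, hst⟩ := hstat ε hε0
    obtain ⟨hP0, -⟩ := hstoch ε hε0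
    calc π ε x * P ε x y ≤ ∑ z, π ε z * P ε z y :=
          Finset.single_le_sum (fun z _ => mul_nonneg (hπ0 z) (hP0 z y)) (Finset.mem_univ x)
    _ = π ε y := hst y
  have hneV : Nonempty V := hconn.nonempty
  obtain ⟨v0⟩ := hneV
  haveI hneΩ : Nonempty (Config V n) := ⟨⟨fun w => if w = v0 then n else 0, by simp⟩⟩
  set h : Config V n → ℤ := fun z => φπ z - ν z with hhdef
  set m : ℤ := Finset.univ.inf' Finset.univ_nonempty h with hmdef
  obtain ⟨u0, -, hu0⟩ := Finset.exists_mem_eq_inf' (Finset.univ_nonempty (α := Config V n)) h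
  have hmle : ∀ z : Config V n, m ≤ h z := fun z => Finset.inf'_le h (Finset.mem_univ z)
  have hz' : ∀ p : Config V n × Config V n, ∃ δ : ℝ, 0 < δ ∧
      ∀ ε : ℝ, 0 < ε → ε < δ → ¬ EPos P p.1 p.2 → P ε p.1 p.2 = 0 := by
    intro p
    by_cases hp : EPos P p.1 p.2
    · exact ⟨1, one_pos, fun ε _ _ hc => absurd hp hc⟩
    · obtain ⟨δ, hδ, hd⟩ := hzero p.1 p.2 hp
      exact ⟨δ, hδ, fun ε h1 h2 _ => hd ε h1 h2⟩
  choose δf hδf hvan using hz'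
  set δ0 : ℝ := Finset.univ.inf' Finset.univ_nonempty δf with hδ0def
  have hδ00 : 0 < δ0 := by
    rw [hδ0def]
    exact (Finset.lt_inf'_iff _).mpr fun p _ => hδf p
  have hδ0le : ∀ p, δ0 ≤ δf p := fun p => Finset.inf'_le δf (Finset.mem_univ p)
  have hconst : ∀ z : Config V n, h z = m := by
    by_contra hcon
    push_neg at hcon
    obtain ⟨w, hw⟩ := hcon
    set S : Finset (Config V n) := Finset.univ.filter (fun z => h z = m) with hSdef
    have hmemS : ∀ z, z ∈ S ↔ h z = m := by intro z; simp [hSdef]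
    obtain ⟨r, c, hc0, hcr, hstep⟩ := hirr u0 w
    obtain ⟨i, hir, hiS, hiS2⟩ := ClusterAux.exists_exit (fun z => h z = m) c r
      (by show h (c 0) = m; rw [hc0, hmdef]; exact hu0.symm)
      (by show ¬ h (c r) = m; rw [hcr]; exact hw)
    have cross : ∀ x y : Config V n, h x = m → h y ≠ m → EPos P x y →
        φP y x = 1 ∧ φπ y = φπ x + φP x y := by
      intro x y hx hy e
      have e2 : EPos P y x := (hsym x y).mp e
      have h1 := key x y e
      have h2 := key y x e2
      have h3 := hν x y e
      have h4 := h01 y x e2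
      have hx2 : φπ x - ν x = m := hx
      have hy2 : ¬ (φπ y - ν y = m) := hy
      have h5 : m ≤ φπ y - ν y := hmle y
      rcases h4 with h4 | h4 <;> omega
    set E : Finset (Config V n × Config V n) :=
      (S ×ˢ Sᶜ).filter (fun p => EPos P p.1 p.2) with hEdef
    have hEmem : ∀ p : Config V n × Config V n,
        p ∈ E ↔ (h p.1 = m ∧ ¬ h p.2 = m ∧ EPos P p.1 p.2) := by
      intro p
      rw [hEdef, Finset.mem_filter, Finset.mem_product, Finset.mem_compl, hmemS, hmemS]
      tauto
    have hEne : E.Nonempty := ⟨(c i, c (i+1)), (hEmem _).mpr ⟨hiS, hiS2, hstep i hir⟩⟩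
    obtain ⟨K₁, hK₁, hK₁le, p₁, hp₁, hK₁eq⟩ := ClusterAux.theta_sum E
      (fun p ε => π ε p.1 * P ε p.1 p.2) (fun p => φπ p.1 + φP p.1 p.2) hEne
      (fun p hp => ClusterAux.theta_mul (hφπ p.1) (hφP p.1 p.2 ((hEmem p).mp hp).2.2))
    obtain ⟨K₂, hK₂, hK₂le, p₂, hp₂, hK₂eq⟩ := ClusterAux.theta_sum E
      (fun p ε => π ε p.2 * P ε p.2 p.1) (fun p => φπ p.2 + φP p.2 p.1) hEne
      (fun p hp => ClusterAux.theta_mul (hφπ p.2)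
        (hφP p.2 p.1 ((hsym _ _).mp ((hEmem p).mp hp).2.2)))
    have horder : ∀ p ∈ E, φπ p.2 + φP p.2 p.1 = (φπ p.1 + φP p.1 p.2) + 1 := by
      intro p hp
      obtain ⟨h1, h2, h3⟩ := (hEmem p).mp hp
      obtain ⟨hb, hπeq⟩ := cross p.1 p.2 h1 h2 h3
      omega
    have hbal : ∀ ε : ℝ, 0 < ε → ε < δ0 →
        (∑ p ∈ E, π ε p.1 * P ε p.1 p.2) = ∑ p ∈ E, π ε p.2 * P ε p.2 p.1 := by
      intro ε hε0 hεδ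
      obtain ⟨hπ0, hπsum, hst⟩ := hstat ε hε0
      obtain ⟨hP0, hProw⟩ := hstoch ε hε0
      have hvan2 : ∀ x y : Config V n, ¬ EPos P x y → P ε x y = 0 := fun x y hc =>
        hvan (x, y) ε hε0 (lt_of_lt_of_le hεδ (hδ0le (x, y))) hc
      have lhs1 : ∑ y ∈ S, π ε y = ∑ x ∈ S, ∑ y ∈ S, π ε x * P ε x y
                  + ∑ x ∈ Sᶜ, ∑ y ∈ S, π ε x * P ε x y := by
        calc ∑ y ∈ S, π ε y = ∑ y ∈ S, ∑ x, π ε x * P ε x y := by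
              refine Finset.sum_congr rfl ?_; intro y _; rw [hst y]
        _ = ∑ x, ∑ y ∈ S, π ε x * P ε x y := Finset.sum_comm
        _ = _ := (Finset.sum_add_sum_compl S _).symm
      have lhs2 : ∑ y ∈ S, π ε y = ∑ x ∈ S, ∑ y ∈ S, π ε x * P ε x y
                  + ∑ x ∈ S, ∑ y ∈ Sᶜ, π ε x * P ε x y := by
        calc ∑ y ∈ S, π ε y = ∑ x ∈ S, π ε x * ∑ y, P ε x y := by
              refine Finset.sum_congr rfl ?_; intro x _; rw [hProw x, mul_one]
        _ = ∑ x ∈ S, (∑ y ∈ S, π ε x * P ε x y + ∑ y ∈ Sᶜ, π ε x * P ε x y) := by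
              refine Finset.sum_congr rfl ?_; intro x _
              rw [Finset.mul_sum, Finset.sum_add_sum_compl S]
        _ = _ := Finset.sum_add_distrib
      have hAB : ∑ x ∈ S, ∑ y ∈ Sᶜ, π ε x * P ε x y
          = ∑ x ∈ Sᶜ, ∑ y ∈ S, π ε x * P ε x y := by linarith [lhs1.symm.trans lhs2]
      have hA : ∑ x ∈ S, ∑ y ∈ Sᶜ, π ε x * P ε x y = ∑ p ∈ E, π ε p.1 * P ε p.1 p.2 := by
        rw [← Finset.sum_product']
        symm
        apply Finset.sum_subset (Finset.filter_subset _ _)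
        intro p hp hpE
        have hne : ¬ EPos P p.1 p.2 := fun hc => hpE ((Finset.mem_filter).mpr ⟨hp, hc⟩)
        rw [hvan2 _ _ hne, mul_zero]
      have hB : ∑ x ∈ Sᶜ, ∑ y ∈ S, π ε x * P ε x y = ∑ p ∈ E, π ε p.2 * P ε p.2 p.1 := by
        rw [← Finset.sum_product']
        have hres : ∑ p ∈ Sᶜ ×ˢ S, π ε p.1 * P ε p.1 p.2
            = ∑ p ∈ (Sᶜ ×ˢ S).filter (fun p => EPos P p.1 p.2), π ε p.1 * P ε p.1 p.2 := by
          symm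
          apply Finset.sum_subset (Finset.filter_subset _ _)
          intro p hp hpE
          have hne : ¬ EPos P p.1 p.2 := fun hc => hpE ((Finset.mem_filter).mpr ⟨hp, hc⟩)
          rw [hvan2 _ _ hne, mul_zero]
        rw [hres]
        refine Finset.sum_nbij' (fun p => Prod.swap p) (fun p => Prod.swap p) ?_ ?_ ?_ ?_ ?_
        · intro p hp
          rw [Finset.mem_filter, Finset.mem_product] at hp
          rw [hEdef, Finset.mem_filter, Finset.mem_product]
          exact ⟨⟨hp.1.2, hp.1.1⟩, (hsym _ _).mp hp.2⟩
        · intro p hp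
          rw [hEdef, Finset.mem_filter, Finset.mem_product] at hp
          rw [Finset.mem_filter, Finset.mem_product]
          exact ⟨⟨hp.1.2, hp.1.1⟩, (hsym _ _).mp hp.2⟩
        · intro p _; rfl
        · intro p _; rfl
        · intro p _; rfl
      rw [← hA, ← hB]; exact hAB
    have hKeq : K₁ = K₂ := ClusterAux.theta_unique hK₁
      (ClusterAux.theta_congr δ0 hδ00 hbal hK₂)
    have ho2 := horder p₂ hp₂
    have hle2 := hK₁le p₂ hp₂
    omega
  have hedge : ∀ x y : Config V n, EPos P x y → φπ y - φπ x = φP x y - φP y x := by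
    intro x y e
    have h1 : φπ x - ν x = m := hconst x
    have h2 : φπ y - ν y = m := hconst y
    have h3 := hν x y e
    omega
  constructor
  · intro x y e hcard
    have h1 := hedge x y e
    have h2 := hφπval x
    have h3 := hφπval y
    have h4 : ((supp x.val).card : ℤ) = (supp y.val).card := by exact_mod_cast hcard
    omega
  · intro x y e hcard
    have h1 := hedge x y e
    have h2 := hφπval x
    have h3 := hφπval y
    have h4 : ((supp x.val).card : ℤ) + 1 = (supp y.val).card := by exact_mod_cast hcard
    have h5 := h01 x y e
    have h6 := h01 y x ((hsym x y).mp e)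
    rcases h5 with h5|h5 <;> rcases h6 with h6|h6 <;> omega
end

section
/- Let (X^ε, Ω, P^ε) be a clustering process with carrying capacity (L,K) on a finite connected graph with n ≥ 1 particles, and let π^ε be stationary distributions for P^ε whose entries have integer orders of magnitude φ(π(x)). Define μ(x) = Σ_{l=1}^m [min(x_l, L) + max(x_l − K + 1, 0)] and c = min_{x∈Ω} μ(x). Then μ satisfies the order-of-magnitude detailed balance condition (so the family is OM-reversible), and φ(π(x)) = μ(x) − c for every x ∈ Ω. -/
open Finset

/-- `μ(x) = Σ_l [min(x_l, L) + max(x_l − K + 1, 0)]`. -/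
def muCC {V : Type} [Fintype V] {n : ℕ} (L K : ℕ) (x : Config V n) : ℤ :=
  ∑ v, (min (x.val v : ℤ) (L : ℤ) + max ((x.val v : ℤ) - (K : ℤ) + 1) 0)


lemma theta_le_of_le {f g : ℝ → ℝ} {k l : ℤ} (hf : IsTheta f k) (hg : IsTheta g l)
    (hle : ∃ εb > (0:ℝ), ∀ ε, 0 < ε → ε < εb → f ε ≤ g ε) : l ≤ k := by
  obtain ⟨M₁, M₂, e₁, hM₁, hM₂, he₁, h₁⟩ := hf
  obtain ⟨N₁, N₂, e₂, hN₁, hN₂, he₂, h₂⟩ := hg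
  obtain ⟨e₃, he₃, h₃⟩ := hle
  by_contra hkl
  push_neg at hkl
  -- k < l ; then M₁ ε^k ≤ N₂ ε^l ≤ N₂ ε^(k+1) for small ε
  have key : ∀ ε : ℝ, 0 < ε → ε < min 1 (min e₁ (min e₂ e₃)) → M₁ ≤ N₂ * ε := by
    intro ε hε hεlt
    simp only [lt_min_iff] at hεlt
    obtain ⟨hε1, hεe₁, hεe₂, hεe₃⟩ := hεlt
    have h1 : M₁ * ε ^ k ≤ N₂ * ε ^ l :=
      ((h₁ ε hε hεe₁).1.trans (h₃ ε hε hεe₃)).trans (h₂ ε hε hεe₂).2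
    have h2 : ε ^ l ≤ ε ^ (k+1) :=
      zpow_le_zpow_right_of_le_one₀ hε hε1.le (by omega)
    have h3 : M₁ * ε ^ k ≤ N₂ * (ε ^ k * ε) := by
      calc M₁ * ε ^ k ≤ N₂ * ε ^ l := h1
        _ ≤ N₂ * ε ^ (k+1) := by nlinarith [zpow_pos hε l, zpow_pos hε (k+1)]
        _ = N₂ * (ε ^ k * ε) := by rw [zpow_add_one₀ (ne_of_gt hε)]
    have h4 : (0:ℝ) < ε ^ k := zpow_pos hε k
    nlinarith
  set B := min 1 (min e₁ (min e₂ e₃)) with hB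
  have hBpos : 0 < B := by positivity
  set ε := min (B/2) (M₁ / (2 * N₂)) with hε
  have hεpos : 0 < ε := by positivity
  have := key ε hεpos (lt_of_le_of_lt (min_le_left _ _) (by linarith))
  have hle2 : ε ≤ M₁ / (2 * N₂) := min_le_right _ _
  have h5 : N₂ * ε ≤ N₂ * (M₁ / (2 * N₂)) := mul_le_mul_of_nonneg_left hle2 hN₂.le
  have h6 : N₂ * (M₁ / (2 * N₂)) = M₁ / 2 := by field_simp
  linarith

lemma theta_unique {f : ℝ → ℝ} {k l : ℤ} (hf : IsTheta f k) (hg : IsTheta f l) : k = l :=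
  le_antisymm (theta_le_of_le hg hf ⟨1, one_pos, fun _ _ _ => le_rfl⟩)
    (theta_le_of_le hf hg ⟨1, one_pos, fun _ _ _ => le_rfl⟩)

lemma theta_mul {f g : ℝ → ℝ} {k l : ℤ} (hf : IsTheta f k) (hg : IsTheta g l) :
    IsTheta (fun ε => f ε * g ε) (k + l) := by
  obtain ⟨M₁, M₂, e₁, hM₁, hM₂, he₁, h₁⟩ := hf
  obtain ⟨N₁, N₂, e₂, hN₁, hN₂, he₂, h₂⟩ := hg
  refine ⟨M₁*N₁, M₂*N₂, min e₁ e₂, by positivity, by positivity, by positivity, ?_⟩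
  intro ε hε hεlt
  simp only [lt_min_iff] at hεlt
  obtain ⟨hf1, hf2⟩ := h₁ ε hε hεlt.1
  obtain ⟨hg1, hg2⟩ := h₂ ε hε hεlt.2
  have hpk : (0:ℝ) < ε ^ k := zpow_pos hε k
  have hpl : (0:ℝ) < ε ^ l := zpow_pos hε l
  rw [zpow_add₀ (ne_of_gt hε)]
  constructor
  · calc M₁*N₁*(ε^k*ε^l) = (M₁*ε^k)*(N₁*ε^l) := by ring
      _ ≤ f ε * g ε := mul_le_mul hf1 hg1 (by positivity) (le_trans (by positivity) hf1)
  · calc f ε * g ε ≤ (M₂*ε^k)*(N₂*ε^l) :=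
        mul_le_mul hf2 hg2 (le_trans (by positivity) hg1) (by positivity)
      _ = M₂*N₂*(ε^k*ε^l) := by ring

/-- Each summand is eventually zero or `Θ(ε^{kᵢ})` with `kᵢ ≥ m`; then the sum is
eventually `≤ C ε^m`. -/
lemma sum_upper {ι : Type*} (s : Finset ι) (f : ι → ℝ → ℝ) (k : ι → ℤ) (m : ℤ)
    (h : ∀ i ∈ s, (IsTheta (f i) (k i) ∧ m ≤ k i) ∨
      ∃ εb > (0:ℝ), ∀ ε, 0 < ε → ε < εb → f i ε = 0) :
    ∃ C > (0:ℝ), ∃ εb > (0:ℝ), ∀ ε, 0 < ε → ε < εb →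
      (∑ i ∈ s, f i ε) ≤ C * ε ^ m := by
  classical
  induction s using Finset.induction_on with
  | empty =>
    exact ⟨1, one_pos, 1, one_pos, fun ε hε _ => by
      simp [le_of_lt (zpow_pos hε m)]⟩
  | @insert a s ha ih =>
    obtain ⟨C, hC, εb, hεb, hs⟩ := ih (fun i hi => h i (Finset.mem_insert_of_mem hi))
    rcases h a (Finset.mem_insert_self a s) with ⟨⟨M₁, M₂, e, hM₁, hM₂, he, hT⟩, hmk⟩ | ⟨e, he, hz⟩
    · refine ⟨C + M₂, by positivity, min 1 (min εb e), by positivity, ?_⟩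
      intro ε hε hlt
      simp only [lt_min_iff] at hlt
      rw [Finset.sum_insert ha]
      have h1 : f a ε ≤ M₂ * ε ^ (k a) := (hT ε hε hlt.2.2).2
      have h2 : ε ^ (k a) ≤ ε ^ m := zpow_le_zpow_right_of_le_one₀ hε hlt.1.le hmk
      have h3 : f a ε ≤ M₂ * ε ^ m := h1.trans (mul_le_mul_of_nonneg_left h2 hM₂.le)
      have h4 := hs ε hε hlt.2.1
      have : (C + M₂) * ε ^ m = C * ε ^ m + M₂ * ε ^ m := by ring
      linarith
    · refine ⟨C, hC, min εb e, by positivity, ?_⟩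
      intro ε hε hlt
      simp only [lt_min_iff] at hlt
      rw [Finset.sum_insert ha, hz ε hε hlt.2]
      simpa using hs ε hε hlt.1


lemma theta_const_one : IsTheta (fun _ => (1:ℝ)) 0 := by
  refine ⟨1, 1, 1, one_pos, one_pos, one_pos, fun ε hε _ => ?_⟩
  simp

lemma no_squeeze {m₀ : ℤ} {M C : ℝ} (hM : 0 < M) (hC : 0 < C) {εb : ℝ} (hεb : 0 < εb)
    (h : ∀ ε, 0 < ε → ε < εb → M * ε ^ m₀ ≤ C * ε ^ (m₀ + 1)) : False := by
  set ε := min (εb / 2) (M / (2 * C)) with hε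
  have hεpos : 0 < ε := by positivity
  have h1 := h ε hεpos (lt_of_le_of_lt (min_le_left _ _) (by linarith))
  have h2 : ε ^ (m₀ + 1) = ε ^ m₀ * ε := zpow_add_one₀ (ne_of_gt hεpos) m₀
  have h3 : (0:ℝ) < ε ^ m₀ := zpow_pos hεpos m₀
  have h4 : M ≤ C * ε := by
    rw [h2] at h1
    have := mul_le_mul_of_nonneg_right h1 (le_of_lt (inv_pos.2 h3))
    calc M = M * ε ^ m₀ * (ε ^ m₀)⁻¹ := by field_simp
      _ ≤ C * (ε ^ m₀ * ε) * (ε ^ m₀)⁻¹ := this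
      _ = C * ε := by field_simp
  have h5 : ε ≤ M / (2 * C) := min_le_right _ _
  have h6 : C * ε ≤ C * (M / (2 * C)) := mul_le_mul_of_nonneg_left h5 hC.le
  have h7 : C * (M / (2 * C)) = M / 2 := by field_simp
  linarith

variable {V : Type} [Fintype V] [DecidableEq V]

lemma move_apply_fst (x : V → ℕ) {i j : V} (h : i ≠ j) : move x i j i = x i - 1 := by
  simp [move, h, Function.update_of_ne h, Function.update_self]

lemma move_apply_snd (x : V → ℕ) {i j : V} (h : i ≠ j) : move x i j j = x j + 1 := by
  simp [move, h]

lemma move_apply_other (x : V → ℕ) {i j v : V} (hvi : v ≠ i) (hvj : v ≠ j) :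
    move x i j v = x v := by
  by_cases h : i = j
  · simp [move, h]
  · simp [move, h, Function.update_of_ne hvj, Function.update_of_ne hvi]

lemma move_move (x : V → ℕ) {i j : V} (h : i ≠ j) (hx : 1 ≤ x i) :
    move (move x i j) j i = x := by
  funext v
  by_cases hvj : v = j
  · subst hvj
    rw [move_apply_fst _ (Ne.symm h), move_apply_snd _ h]
    omega
  · by_cases hvi : v = i
    · subst hvi
      rw [move_apply_snd _ (Ne.symm h), move_apply_fst _ h]
      omega
    · rw [move_apply_other _ hvj hvi, move_apply_other _ hvi hvj]

lemma move_sum (x : V → ℕ) {i j : V} (hx : 1 ≤ x i) :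
    ∑ v, move x i j v = ∑ v, x v := by
  by_cases h : i = j
  · simp [move, h]
  · rw [← Finset.sum_erase_add _ _ (Finset.mem_univ j),
        ← Finset.sum_erase_add _ _ (Finset.mem_univ j)]
    have hi : i ∈ Finset.univ.erase j := Finset.mem_erase.2 ⟨h, Finset.mem_univ i⟩
    rw [← Finset.sum_erase_add _ _ hi, ← Finset.sum_erase_add _ _ hi]
    rw [move_apply_fst _ h, move_apply_snd _ h]
    have : ∀ v ∈ (Finset.univ.erase j).erase i, move x i j v = x v := by
      intro v hv
      simp only [Finset.mem_erase] at hv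
      exact move_apply_other _ hv.1 hv.2.1
    rw [Finset.sum_congr rfl this]
    have hS : ((Finset.univ.erase j).erase i).sum x
        = ∑ v ∈ (Finset.univ.erase j).erase i, x v := rfl
    rw [hS]
    omega

/-- `f(t) = min(t,L) + max(t-K+1,0)` single-site weight. -/
def fCC (L K : ℕ) (t : ℕ) : ℤ := min (t : ℤ) (L : ℤ) + max ((t : ℤ) - (K : ℤ) + 1) 0

lemma fCC_step (L K : ℕ) (hLK : L < K) (t : ℕ) :
    fCC L K (t + 1) - fCC L K t = if t + 1 ≤ L ∨ K ≤ t + 1 then 1 else 0 := by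
  simp only [fCC]
  push_cast
  split <;> omega

lemma muCC_eq_sum_fCC {n : ℕ} (L K : ℕ) (x : Config V n) :
    muCC L K x = ∑ v, fCC L K (x.val v) := rfl

lemma muCC_move {n : ℕ} (L K : ℕ) (hLK : L < K) (x y : Config V n) {i j : V}
    (hij : i ≠ j) (hxi : 1 ≤ x.val i) (hy : y.val = move x.val i j) :
    muCC L K x + (if x.val j + 1 ≤ L ∨ K ≤ x.val j + 1 then 1 else 0)
      = muCC L K y + (if x.val i ≤ L ∨ K ≤ x.val i then 1 else 0) := by
  rw [muCC_eq_sum_fCC, muCC_eq_sum_fCC]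
  have hyv : ∀ v, v ≠ i → v ≠ j → y.val v = x.val v := fun v hvi hvj => by
    rw [hy]; exact move_apply_other _ hvi hvj
  have hyi : y.val i = x.val i - 1 := by rw [hy]; exact move_apply_fst _ hij
  have hyj : y.val j = x.val j + 1 := by rw [hy]; exact move_apply_snd _ hij
  have split : ∀ z : V → ℕ, ∑ v, fCC L K (z v) =
      fCC L K (z i) + fCC L K (z j) + ∑ v ∈ (Finset.univ.erase j).erase i, fCC L K (z v) := by
    intro z
    have hi : i ∈ Finset.univ.erase j := Finset.mem_erase.2 ⟨hij, Finset.mem_univ i⟩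
    rw [← Finset.sum_erase_add _ _ (Finset.mem_univ j), ← Finset.sum_erase_add _ _ hi]
    ring
  rw [split, split]
  have hrest : ∑ v ∈ (Finset.univ.erase j).erase i, fCC L K (y.val v)
      = ∑ v ∈ (Finset.univ.erase j).erase i, fCC L K (x.val v) := by
    refine Finset.sum_congr rfl fun v hv => ?_
    simp only [Finset.mem_erase] at hv
    rw [hyv v hv.1 hv.2.1]
  rw [hrest, hyi, hyj]
  have e1 : x.val i = (x.val i - 1) + 1 := by omega
  have h1 : fCC L K (x.val j + 1) - fCC L K (x.val j)
      = if x.val j + 1 ≤ L ∨ K ≤ x.val j + 1 then 1 else 0 := fCC_step L K hLK _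
  have h2 : fCC L K (x.val i) - fCC L K (x.val i - 1)
      = if x.val i ≤ L ∨ K ≤ x.val i then 1 else 0 := by
    have := fCC_step L K hLK (x.val i - 1)
    rw [← e1] at this
    rw [this]
  omega

lemma move_weight_sum (g : V → ℕ) (x : V → ℕ) {i j : V} (hij : i ≠ j) (hx : 1 ≤ x i) :
    (∑ v, g v * move x i j v) + g i = (∑ v, g v * x v) + g j := by
  have hi : i ∈ Finset.univ.erase j := Finset.mem_erase.2 ⟨hij, Finset.mem_univ i⟩
  have split : ∀ z : V → ℕ, ∑ v, g v * z v =
      g i * z i + g j * z j + ∑ v ∈ (Finset.univ.erase j).erase i, g v * z v := by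
    intro z
    rw [← Finset.sum_erase_add _ _ (Finset.mem_univ j), ← Finset.sum_erase_add _ _ hi]
    ring
  rw [split, split]
  have hrest : ∑ v ∈ (Finset.univ.erase j).erase i, g v * move x i j v
      = ∑ v ∈ (Finset.univ.erase j).erase i, g v * x v := by
    refine Finset.sum_congr rfl fun v hv => ?_
    simp only [Finset.mem_erase] at hv
    rw [move_apply_other _ hv.1 hv.2.1]
  rw [hrest, move_apply_fst _ hij, move_apply_snd _ hij]
  have hS : (((Finset.univ.erase j).erase i).sum fun v => g v * x v)
      = ∑ v ∈ (Finset.univ.erase j).erase i, g v * x v := rfl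
  rw [hS]
  have h1 : g i * (x i - 1) + g i = g i * x i := by
    conv_rhs => rw [← Nat.sub_add_cancel hx]
    rw [Nat.mul_succ]
  have h2 : g j * (x j + 1) = g j * x j + g j := Nat.mul_succ _ _
  omega

/-- Single-particle move relation on configurations. -/
def Mv {n : ℕ} (G : SimpleGraph V) (x y : Config V n) : Prop :=
  ∃ i j : V, G.Adj i j ∧ 1 ≤ x.val i ∧ y.val = move x.val i j

lemma Mv.symm {n : ℕ} {G : SimpleGraph V} {x y : Config V n} (h : Mv G x y) : Mv G y x := by
  obtain ⟨i, j, hadj, hxi, hy⟩ := h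
  have hij : i ≠ j := hadj.ne
  refine ⟨j, i, hadj.symm, ?_, ?_⟩
  · rw [hy, move_apply_snd _ hij]; omega
  · rw [hy, move_move _ hij hxi]

lemma reach_symm {n : ℕ} {G : SimpleGraph V} {x y : Config V n}
    (h : Relation.ReflTransGen (Mv G) x y) : Relation.ReflTransGen (Mv G) y x := by
  induction h with
  | refl => exact Relation.ReflTransGen.refl
  | tail _ hmv ih => exact Relation.ReflTransGen.head hmv.symm ih

lemma reach_all {n : ℕ} {G : SimpleGraph V} (hconn : G.Connected) (x y : Config V n) :
    Relation.ReflTransGen (Mv G) x y := by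
  obtain ⟨v₀⟩ := hconn.nonempty
  have hdelta : (∑ v, if v = v₀ then n else 0) = n := by simp
  set δ : Config V n := ⟨fun v => if v = v₀ then n else 0, hdelta⟩ with hδ
  suffices h : ∀ z : Config V n, Relation.ReflTransGen (Mv G) z δ by
    exact (h x).trans (reach_symm (h y))
  intro z
  generalize hWz : (∑ v, G.dist v₀ v * z.val v) = W
  induction W using Nat.strong_induction_on generalizing z with
  | _ W ih =>
  by_cases hW : W = 0
  · subst hW
    have hterms := Finset.sum_eq_zero_iff.1 hWz
    have hz0 : ∀ v, v ≠ v₀ → z.val v = 0 := by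
      intro v hv
      have hd : 0 < G.dist v₀ v := hconn.pos_dist_of_ne (Ne.symm hv)
      have hv0 := hterms v (Finset.mem_univ v)
      rcases Nat.mul_eq_zero.1 hv0 with h | h
      · omega
      · exact h
    have hzeq : z = δ := by
      refine Subtype.ext (funext fun v => ?_)
      by_cases hv : v = v₀
      · have hsum := z.2
        rw [Finset.sum_eq_single_of_mem v₀ (Finset.mem_univ v₀)
          (fun b _ hb => hz0 b hb)] at hsum
        simp [hδ, hv, hsum]
      · simp [hδ, hv, hz0 v hv]
    rw [hzeq]
  · -- W > 0 : find an occupied vertex away from v₀ and move it closer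
    have hex : ∃ v, G.dist v₀ v * z.val v ≠ 0 := by
      by_contra hno
      push_neg at hno
      exact hW (by rw [← hWz]; exact Finset.sum_eq_zero fun v _ => hno v)
    obtain ⟨v, hv⟩ := hex
    have hdv : 0 < G.dist v₀ v := Nat.pos_of_ne_zero (fun h => hv (by rw [h]; ring))
    have hzv : 1 ≤ z.val v := Nat.pos_of_ne_zero (fun h => hv (by rw [h]; ring))
    have hreach : G.Reachable v v₀ := (hconn v v₀)
    obtain ⟨p, hp⟩ := hreach.exists_walk_length_eq_dist
    have hdvv : 0 < G.dist v v₀ := by rw [SimpleGraph.dist_comm]; exact hdv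
    cases p with
    | nil => simp [SimpleGraph.dist_self] at hdv
    | @cons _ u _ hadj q =>
      have hq : q.length + 1 = G.dist v v₀ := by simpa using hp
      have hdu : G.dist v₀ u < G.dist v₀ v := by
        have h1 : G.dist u v₀ ≤ q.length := SimpleGraph.dist_le q
        have h2 : G.dist v₀ u = G.dist u v₀ := SimpleGraph.dist_comm
        have h3 : G.dist v₀ v = G.dist v v₀ := SimpleGraph.dist_comm
        omega
      set y : Config V n := ⟨move z.val v u, by rw [move_sum _ hzv]; exact z.2⟩ with hy
      have hmv : Mv G z y := ⟨v, u, hadj, hzv, rfl⟩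
      have hWy : (∑ w, G.dist v₀ w * y.val w) < W := by
        show (∑ w, G.dist v₀ w * move z.val v u w) < W
        have := move_weight_sum (fun w => G.dist v₀ w) z.val hadj.ne hzv
        omega
      exact Relation.ReflTransGen.head hmv
        (ih _ hWy y rfl)

lemma cross_pair {n : ℕ} {G : SimpleGraph V} (hconn : G.Connected)
    (A : Finset (Config V n)) {x₀ y₀ : Config V n} (hx : x₀ ∈ A) (hy : y₀ ∉ A) :
    ∃ a ∈ A, ∃ b, b ∉ A ∧ Mv G a b := by
  suffices H : ∀ y : Config V n, Relation.ReflTransGen (Mv G) x₀ y → y ∉ A →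
      ∃ a ∈ A, ∃ b, b ∉ A ∧ Mv G a b from H y₀ (reach_all hconn x₀ y₀) hy
  intro y h
  induction h with
  | refl => exact fun h' => absurd hx h'
  | @tail b d hR hmv ih =>
    intro hd
    by_cases hb : b ∈ A
    · exact ⟨b, hb, d, hd, hmv⟩
    · exact ih hb


/-- For a clustering process with carrying capacity `(L,K)`, the function `μ` satisfies
order-of-magnitude detailed balance (so the family is OM-reversible), and any stationary
distributions `π^ε` with integer orders of magnitude satisfy `φ(π(x)) = μ(x) − c`, where
`c = min_{x ∈ Ω} μ(x)`. -/
theorem clustering_with_carrying_capacity_stationary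
    {V : Type} [Fintype V] [DecidableEq V]
    (G : SimpleGraph V) (hconn : G.Connected)
    (n : ℕ) (hn : 1 ≤ n)
    (L K : ℕ) (hL : 0 < L) (hLK : L < K)
    (P : ℝ → Config V n → Config V n → ℝ)
    (hstoch : ∀ ε : ℝ, 0 < ε →
      (∀ x y : Config V n, 0 ≤ P ε x y) ∧ ∀ x : Config V n, ∑ y, P ε x y = 1)
    (hmoves : ∀ x y : Config V n, EPos P x y →
      y = x ∨ ∃ i j : V, G.Adj i j ∧ 1 ≤ x.val i ∧ y.val = move x.val i j)
    (hzero : ∀ x y : Config V n, ¬ EPos P x y →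
      ∃ εbar > (0 : ℝ), ∀ ε : ℝ, 0 < ε → ε < εbar → P ε x y = 0)
    (hsym : ∀ x y : Config V n, EPos P x y ↔ EPos P y x)
    (hrate : ∀ (x y : Config V n) (i j : V), (G.Adj i j ∨ j = i) → 1 ≤ x.val i →
      y.val = move x.val i j →
      IsTheta (fun ε => P ε x y)
        (if x.val j + 1 ≤ L ∨ K ≤ x.val j + 1 then 1 else 0))
    (φP : Config V n → Config V n → ℤ)
    (hφP : ∀ x y : Config V n, EPos P x y → IsTheta (fun ε => P ε x y) (φP x y))
    (c : ℤ) (hc : IsLeast (Set.range (muCC L K : Config V n → ℤ)) c)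
    (π : ℝ → Config V n → ℝ)
    (hstat : ∀ ε : ℝ, 0 < ε → (∀ z : Config V n, 0 ≤ π ε z) ∧ (∑ z, π ε z) = 1 ∧
      ∀ y : Config V n, (∑ x, π ε x * P ε x y) = π ε y)
    (φπ : Config V n → ℤ)
    (hφπ : ∀ z : Config V n, IsTheta (fun ε => π ε z) (φπ z)) :
    (∀ x y : Config V n, EPos P x y →
      muCC L K x + φP x y = muCC L K y + φP y x) ∧
    (∀ z : Config V n, φπ z = muCC L K z - c) := by
  classical
  -- Part 1 : order-of-magnitude detailed balance
  have part1 : ∀ x y : Config V n, EPos P x y →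
      muCC L K x + φP x y = muCC L K y + φP y x := by
    intro x y hE
    rcases hmoves x y hE with rfl | ⟨i, j, hadj, hxi, hy⟩
    · rfl
    · have hij : i ≠ j := hadj.ne
      have hE' : EPos P y x := (hsym x y).1 hE
      have hr1 := hrate x y i j (Or.inl hadj) hxi hy
      have hyj1 : 1 ≤ y.val j := by rw [hy, move_apply_snd _ hij]; omega
      have hxmove : x.val = move y.val j i := by
        rw [hy, move_move _ hij hxi]
      have hr2 := hrate y x j i (Or.inl hadj.symm) hyj1 hxmove
      have e1 : φP x y = if x.val j + 1 ≤ L ∨ K ≤ x.val j + 1 then 1 else 0 :=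
        theta_unique (hφP x y hE) hr1
      have e2 : φP y x = if y.val i + 1 ≤ L ∨ K ≤ y.val i + 1 then 1 else 0 :=
        theta_unique (hφP y x hE') hr2
      have hyi : y.val i + 1 = x.val i := by rw [hy, move_apply_fst _ hij]; omega
      rw [hyi] at e2
      rw [e1, e2]
      exact muCC_move L K hLK x y hij hxi hy
  refine ⟨part1, ?_⟩
  -- Step A : φπ y ≤ φπ x + φP x y  whenever  EPos P x y
  have stepA : ∀ x y : Config V n, EPos P x y → φπ y ≤ φπ x + φP x y := by
    intro x y hE
    refine theta_le_of_le (theta_mul (hφπ x) (hφP x y hE)) (hφπ y)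
      ⟨1, one_pos, fun ε hε _ => ?_⟩
    have hst := (hstat ε hε).2.2 y
    rw [← hst]
    exact Finset.single_le_sum
      (f := fun x' => π ε x' * P ε x' y)
      (fun x' _ => mul_nonneg ((hstat ε hε).1 x') ((hstoch ε hε).1 x' y))
      (Finset.mem_univ x)
  -- the difference g := φπ - μ
  set g : Config V n → ℤ := fun z => φπ z - muCC L K z with hgdef
  obtain ⟨x₀, hx₀⟩ := hc.1
  have hΩ : Nonempty (Config V n) := ⟨x₀⟩
  obtain ⟨zm, -, hzm⟩ := Finset.exists_min_image Finset.univ g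
    ⟨x₀, Finset.mem_univ x₀⟩
  -- g is constant on Ω
  have hgconst : ∀ z : Config V n, g z = g zm := by
    by_contra hnc
    push_neg at hnc
    obtain ⟨y₀, hy₀⟩ := hnc
    set A : Finset (Config V n) := Finset.univ.filter (fun z => g z = g zm) with hA
    have hmemA : ∀ z : Config V n, z ∈ A ↔ g z = g zm := by
      intro z; simp [hA]
    have hy₀A : y₀ ∉ A := fun h => hy₀ ((hmemA y₀).1 h)
    have hzmA : zm ∈ A := (hmemA zm).2 rfl
    obtain ⟨a, haA, b, hbA, hmv⟩ := cross_pair hconn A hzmA hy₀A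
    have hEab : EPos P a b := by
      obtain ⟨i, j, hadj, hai, hb⟩ := hmv
      exact ⟨_, hrate a b i j (Or.inl hadj) hai hb⟩
    -- the cross set and the minimal communication weight
    set C₁ : Finset (Config V n × Config V n) :=
      (A ×ˢ Aᶜ).filter (fun p => EPos P p.1 p.2) with hC₁
    have hmemC₁ : ∀ p : Config V n × Config V n,
        p ∈ C₁ ↔ (p.1 ∈ A ∧ p.2 ∉ A) ∧ EPos P p.1 p.2 := by
      intro p
      simp [hC₁, Finset.mem_filter, Finset.mem_product]
    have hC₁ne : C₁.Nonempty := ⟨(a, b), (hmemC₁ (a, b)).2 ⟨⟨haA, hbA⟩, hEab⟩⟩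
    set w : Config V n × Config V n → ℤ := fun p => muCC L K p.1 + φP p.1 p.2 with hw
    obtain ⟨p₀, hp₀C, hp₀min⟩ := Finset.exists_min_image C₁ w hC₁ne
    obtain ⟨⟨hp₀1, hp₀2⟩, hp₀E⟩ := (hmemC₁ p₀).1 hp₀C
    set m₀ : ℤ := g zm + w p₀ with hm₀
    -- lower bound for the out-flow
    have hπpos : ∀ (ε : ℝ), 0 < ε → ∀ q : Config V n × Config V n,
        0 ≤ π ε q.1 * P ε q.1 q.2 := fun ε hε q =>
      mul_nonneg ((hstat ε hε).1 q.1) ((hstoch ε hε).1 q.1 q.2)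
    have hlow : ∃ M > (0:ℝ), ∃ e₁ > (0:ℝ), ∀ ε, 0 < ε → ε < e₁ →
        M * ε ^ m₀ ≤ ∑ p ∈ A ×ˢ Aᶜ, π ε p.1 * P ε p.1 p.2 := by
      have hth : IsTheta (fun ε => π ε p₀.1 * P ε p₀.1 p₀.2) m₀ := by
        have h1 := theta_mul (hφπ p₀.1) (hφP p₀.1 p₀.2 hp₀E)
        have h2 : φπ p₀.1 + φP p₀.1 p₀.2 = m₀ := by
          have h3 := (hmemA p₀.1).1 hp₀1
          simp only [hgdef] at h3
          simp only [hm₀, hw, hgdef]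
          omega
        rwa [h2] at h1
      obtain ⟨M₁, M₂, e, hM₁, hM₂, he, hT⟩ := hth
      refine ⟨M₁, hM₁, e, he, fun ε hε hεe => ?_⟩
      refine le_trans (hT ε hε hεe).1 ?_
      refine Finset.single_le_sum (f := fun p => π ε p.1 * P ε p.1 p.2)
        (fun q _ => hπpos ε hε q) ?_
      rw [Finset.mem_product]
      exact ⟨hp₀1, Finset.mem_compl.2 hp₀2⟩
    -- upper bound for the in-flow
    have hup : ∃ C > (0:ℝ), ∃ e₂ > (0:ℝ), ∀ ε, 0 < ε → ε < e₂ →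
        (∑ q ∈ Aᶜ ×ˢ A, π ε q.1 * P ε q.1 q.2) ≤ C * ε ^ (m₀ + 1) := by
      refine sum_upper (Aᶜ ×ˢ A) (fun q ε => π ε q.1 * P ε q.1 q.2)
        (fun q => φπ q.1 + φP q.1 q.2) (m₀ + 1) ?_
      intro q hq
      rw [Finset.mem_product, Finset.mem_compl] at hq
      by_cases hEq : EPos P q.1 q.2
      · left
        refine ⟨theta_mul (hφπ q.1) (hφP q.1 q.2 hEq), ?_⟩
        -- m₀ + 1 ≤ φπ q.1 + φP q.1 q.2
        have hq1 : g zm + 1 ≤ g q.1 := by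
          have hle := hzm q.1 (Finset.mem_univ q.1)
          have hne : g q.1 ≠ g zm := fun h => hq.1 ((hmemA q.1).2 h)
          omega
        have hswap : (q.2, q.1) ∈ C₁ := by
          refine (hmemC₁ (q.2, q.1)).2 ⟨⟨hq.2, hq.1⟩, (hsym q.1 q.2).1 hEq⟩
        have hwge : w p₀ ≤ w (q.2, q.1) := hp₀min _ hswap
        have hbal := part1 q.1 q.2 hEq
        simp only [hgdef] at hq1
        simp only [hw] at hwge
        simp only [hm₀, hw, hgdef]
        omega
      · right
        obtain ⟨eb, heb, hz⟩ := hzero q.1 q.2 hEq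
        exact ⟨eb, heb, fun ε hε hεe => by
          show π ε q.1 * P ε q.1 q.2 = 0
          rw [hz ε hε hεe, mul_zero]⟩
    -- exact flow balance for every ε
    have hbalance : ∀ ε : ℝ, 0 < ε →
        (∑ p ∈ A ×ˢ Aᶜ, π ε p.1 * P ε p.1 p.2)
          = ∑ q ∈ Aᶜ ×ˢ A, π ε q.1 * P ε q.1 q.2 := by
      intro ε hε
      obtain ⟨hPnn, hProw⟩ := hstoch ε hε
      obtain ⟨hπnn, hπsum, hπstat⟩ := hstat ε hε
      have e₁ : ∀ s t : Finset (Config V n),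
          (∑ p ∈ s ×ˢ t, π ε p.1 * P ε p.1 p.2)
            = ∑ x ∈ s, ∑ y ∈ t, π ε x * P ε x y := by
        intro s t; rw [Finset.sum_product]
      have lhs1 : (∑ x ∈ A, ∑ y ∈ A, π ε x * P ε x y)
            + (∑ x ∈ A, ∑ y ∈ Aᶜ, π ε x * P ε x y) = ∑ x ∈ A, π ε x := by
        rw [← Finset.sum_add_distrib]
        refine Finset.sum_congr rfl fun x _ => ?_
        rw [← Finset.mul_sum, ← Finset.mul_sum, ← mul_add,
          Finset.sum_add_sum_compl, hProw x, mul_one]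
      have rhs1 : (∑ x ∈ A, ∑ y ∈ A, π ε x * P ε x y)
            + (∑ x ∈ Aᶜ, ∑ y ∈ A, π ε x * P ε x y) = ∑ y ∈ A, π ε y := by
        rw [Finset.sum_comm (s := A) (t := A), Finset.sum_comm (s := Aᶜ) (t := A),
          ← Finset.sum_add_distrib]
        refine Finset.sum_congr rfl fun y _ => ?_
        rw [Finset.sum_add_sum_compl, hπstat y]
      rw [e₁, e₁]
      linarith
    -- contradiction
    obtain ⟨M, hM, e₁, he₁, hlb⟩ := hlow
    obtain ⟨C, hC, e₂, he₂, hub⟩ := hup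
    refine no_squeeze (m₀ := m₀) hM hC (show (0:ℝ) < min e₁ e₂ by positivity) fun ε hε hεe => ?_
    simp only [lt_min_iff] at hεe
    calc M * ε ^ m₀ ≤ ∑ p ∈ A ×ˢ Aᶜ, π ε p.1 * P ε p.1 p.2 := hlb ε hε hεe.1
      _ = ∑ q ∈ Aᶜ ×ˢ A, π ε q.1 * P ε q.1 q.2 := hbalance ε hε
      _ ≤ C * ε ^ (m₀ + 1) := hub ε hε hεe.2
  -- conclusion : identify the constant
  set d : ℤ := g zm with hd
  have hφeq : ∀ z : Config V n, φπ z = muCC L K z + d := by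
    intro z
    have := hgconst z
    simp only [hgdef] at this
    omega
  -- φπ is nonnegative
  have hnn : ∀ z : Config V n, 0 ≤ φπ z := by
    intro z
    refine theta_le_of_le (hφπ z) theta_const_one ⟨1, one_pos, fun ε hε _ => ?_⟩
    obtain ⟨hπnn, hπsum, -⟩ := hstat ε hε
    rw [← hπsum]
    exact Finset.single_le_sum (fun z' _ => hπnn z') (Finset.mem_univ z)
  -- some state has order ≤ 0
  have hle0 : ∃ z : Config V n, φπ z ≤ 0 := by
    by_contra hno
    push_neg at hno
    obtain ⟨C, hC, e₂, he₂, hub⟩ := sum_upper (Finset.univ : Finset (Config V n))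
      (fun z ε => π ε z) φπ 1 (fun z _ => Or.inl ⟨hφπ z, hno z⟩)
    refine no_squeeze (m₀ := 0) one_pos hC he₂ fun ε hε hεe => ?_
    have h1 := hub ε hε hεe
    have h2 : (∑ z, π ε z) = 1 := (hstat ε hε).2.1
    rw [h2] at h1
    simpa using h1
  -- μ(x₀) = c is minimal, hence c + d = 0
  have hcd0 : c + d = 0 := by
    have h1 : 0 ≤ c + d := by
      have := hnn x₀
      rw [hφeq x₀, hx₀] at this
      omega
    have h2 : c + d ≤ 0 := by
      obtain ⟨z, hz⟩ := hle0
      have hμz : c ≤ muCC L K z := hc.2 ⟨z, rfl⟩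
      have := hφeq z
      omega
    omega
  intro z
  rw [hφeq z]
  omega
end
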